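/- If $G$ is a connected graph on $n$ vertices with at least 2 cut vertices, then there exists $p \in (0,1)$ with $\mathrm{nRel}(G;p) = p$; that is, the node reliability polynomial has a fixed point in $(0,1)$. -/

import Mathlib

open Finset
open scoped Classical

/-- The node reliability polynomial of a graph `G`: the probability that the set of
operational nodes is nonempty and induces a connected subgraph, when each node
operates independently with probability `p`. -/
noncomputable def nRel {V : Type*} [Fintype V] (G : SimpleGraph V) (p : ℝ) : ℝ :=
  ∑ s : Finset V, if (G.induce (s : Set V)).Connected
    then p ^ s.card * (1 - p) ^ (Fintype.card V - s.card) else 0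

/-- `cCount G k` is the number of `k`-element vertex subsets of `G` inducing a
connected subgraph (note: `SimpleGraph.Connected` requires nonemptiness). -/
noncomputable def cCount {V : Type*} [Fintype V] (G : SimpleGraph V) (k : ℕ) : ℕ :=
  ((Finset.univ : Finset (Finset V)).filter
    (fun s : Finset V => s.card = k ∧ (G.induce (s : Set V)).Connected)).card

/-- The number of cut vertices of `G`: vertices whose removal disconnects the graph. -/
noncomputable def cutVertexCount {V : Type*} [Fintype V] (G : SimpleGraph V) : ℕ :=
  (Finset.univ.filter (fun v : V => ¬ (G.induce {u | u ≠ v}).Connected)).card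


lemma aux_hasDerivAt_term (k m : ℕ) (x : ℝ) :
    HasDerivAt (fun p : ℝ => p ^ k * (1 - p) ^ m)
      ((k : ℝ) * x ^ (k-1) * (1-x) ^ m - (m : ℝ) * (x ^ k * (1-x) ^ (m-1))) x := by
  have h1 : HasDerivAt (fun p : ℝ => p ^ k) ((k : ℝ) * x ^ (k-1)) x := hasDerivAt_pow k x
  have h2 : HasDerivAt (fun p : ℝ => (1 - p) ^ m) (-((m:ℝ) * (1-x)^(m-1))) x := by
    have := ((hasDerivAt_pow m (1 - x)).comp x
      ((hasDerivAt_const x (1:ℝ)).sub (hasDerivAt_id x)))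
    simpa [Function.comp_def] using this
  have := h1.fun_mul h2
  exact this.congr_deriv (by ring)

lemma aux_connected_nonempty {V : Type*} [Fintype V] {G : SimpleGraph V} {s : Finset V}
    (h : (G.induce (s : Set V)).Connected) : s.Nonempty := by
  have : Nonempty (s : Set V) := h.nonempty
  exact Finset.coe_nonempty.mp (Set.nonempty_coe_sort.mp this)

lemma aux_singleton_connected {V : Type*} [Fintype V] (G : SimpleGraph V) (v : V) :
    (G.induce ((({v} : Finset V) : Set V))).Connected := by
  rw [SimpleGraph.connected_iff]
  constructor
  · intro a b
    have hs : (({v} : Finset V) : Set V).Subsingleton := by simp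
    have : a = b := Subtype.ext (hs a.2 b.2)
    rw [this]
  · simp

lemma aux_univ_connected {V : Type*} [Fintype V] {G : SimpleGraph V} (hG : G.Connected) :
    (G.induce ((Finset.univ : Finset V) : Set V)).Connected := by
  have h : ((Finset.univ : Finset V) : Set V) = Set.univ := by simp
  rw [h]
  exact ((SimpleGraph.induceUnivIso G).connected_iff).mpr hG

lemma aux_hasDerivAt_nRel {V : Type*} [Fintype V] (G : SimpleGraph V) (x : ℝ) :
    HasDerivAt (nRel G)
      (∑ s : Finset V, if (G.induce (s : Set V)).Connected
        then ((s.card : ℝ) * x ^ (s.card - 1) * (1-x) ^ (Fintype.card V - s.card)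
          - ((Fintype.card V - s.card : ℕ) : ℝ) *
            (x ^ s.card * (1-x) ^ (Fintype.card V - s.card - 1)))
        else 0) x := by
  have : HasDerivAt (fun p : ℝ => ∑ s : Finset V, if (G.induce (s : Set V)).Connected
      then p ^ s.card * (1 - p) ^ (Fintype.card V - s.card) else 0)
      (∑ s : Finset V, if (G.induce (s : Set V)).Connected
        then ((s.card : ℝ) * x ^ (s.card - 1) * (1-x) ^ (Fintype.card V - s.card)
          - ((Fintype.card V - s.card : ℕ) : ℝ) *
            (x ^ s.card * (1-x) ^ (Fintype.card V - s.card - 1)))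
        else 0) x := by
    apply HasDerivAt.fun_sum
    intro s _
    by_cases hs : (G.induce (s : Set V)).Connected
    · simp only [hs, if_true]
      exact aux_hasDerivAt_term _ _ x
    · simp only [hs, if_false]
      exact hasDerivAt_const x 0
  exact this

lemma aux_continuous_nRel {V : Type*} [Fintype V] (G : SimpleGraph V) :
    Continuous (nRel G) := by
  apply continuous_finset_sum
  intro s _
  by_cases hs : (G.induce (s : Set V)).Connected
  · simp only [hs, if_true]; fun_prop
  · simp only [hs, if_false]; fun_prop


lemma aux_nRel_zero {V : Type*} [Fintype V] (G : SimpleGraph V) : nRel G 0 = 0 := by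
  unfold nRel
  apply Finset.sum_eq_zero
  intro s _
  by_cases hs : (G.induce (s : Set V)).Connected
  · have hk : 1 ≤ s.card := Finset.card_pos.mpr (aux_connected_nonempty hs)
    simp [hs, zero_pow (by omega : s.card ≠ 0)]
  · simp [hs]

lemma aux_nRel_one {V : Type*} [Fintype V] (G : SimpleGraph V) (hG : G.Connected) :
    nRel G 1 = 1 := by
  unfold nRel
  have h : ∀ s : Finset V, (if (G.induce (s : Set V)).Connected
      then (1:ℝ) ^ s.card * (1 - 1) ^ (Fintype.card V - s.card) else 0)
      = if s = Finset.univ then 1 else 0 := by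
    intro s
    by_cases hu : s = Finset.univ
    · subst hu
      simp [aux_univ_connected hG]
    · have hlt : s.card < Fintype.card V := by
        have hle : s.card ≤ Fintype.card V := Finset.card_le_univ s
        rcases lt_or_eq_of_le hle with h | h
        · exact h
        · exact absurd (Finset.card_eq_iff_eq_univ s |>.mp h) hu
      by_cases hs : (G.induce (s : Set V)).Connected <;>
        simp [hs, hu, zero_pow (by omega : Fintype.card V - s.card ≠ 0)]
  rw [Finset.sum_congr rfl (fun s _ => h s), Finset.sum_ite_eq' Finset.univ Finset.univ
    (fun _ => (1:ℝ))]
  simp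


lemma aux_d0 {V : Type*} [Fintype V] (G : SimpleGraph V) :
    HasDerivAt (nRel G) (Fintype.card V : ℝ) 0 := by
  have h := aux_hasDerivAt_nRel G 0
  have heq : (∑ s : Finset V, if (G.induce (s : Set V)).Connected
      then ((s.card : ℝ) * (0:ℝ) ^ (s.card - 1)
          * (1-(0:ℝ)) ^ (Fintype.card V - s.card)
        - ((Fintype.card V - s.card : ℕ) : ℝ) *
          ((0:ℝ) ^ s.card * (1-(0:ℝ)) ^ (Fintype.card V - s.card - 1)))
      else 0) = (Fintype.card V : ℝ) := by
    have hterm : ∀ s : Finset V, (if (G.induce (s : Set V)).Connected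
        then ((s.card : ℝ) * (0:ℝ) ^ (s.card - 1)
            * (1-(0:ℝ)) ^ (Fintype.card V - s.card)
          - ((Fintype.card V - s.card : ℕ) : ℝ) *
            ((0:ℝ) ^ s.card * (1-(0:ℝ)) ^ (Fintype.card V - s.card - 1)))
        else 0) = if s.card = 1 then (1:ℝ) else 0 := by
      intro s
      by_cases hs : (G.induce (s : Set V)).Connected
      · have hk : 1 ≤ s.card := Finset.card_pos.mpr (aux_connected_nonempty hs)
        by_cases h1 : s.card = 1
        · simp [hs, h1]
        · simp [hs, h1, zero_pow (by omega : s.card ≠ 0),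
            zero_pow (by omega : s.card - 1 ≠ 0)]
      · have h1 : s.card ≠ 1 := by
          intro hc
          obtain ⟨v, hv⟩ := Finset.card_eq_one.mp hc
          exact hs (hv ▸ aux_singleton_connected G v)
        simp [hs, h1]
    rw [Finset.sum_congr rfl (fun s _ => hterm s), Finset.sum_boole]
    have : Finset.univ.filter (fun s : Finset V => s.card = 1)
        = Finset.univ.powersetCard 1 := by
      rw [Finset.powersetCard_eq_filter]
      ext s; simp
    rw [this, Finset.card_powersetCard]
    simp
  rw [heq] at h
  exact h


lemma aux_card_compl {V : Type*} [Fintype V] (G : SimpleGraph V) :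
    (Finset.univ.filter (fun v : V => (G.induce {u | u ≠ v}).Connected)).card
    = (Finset.univ.filter (fun s : Finset V =>
        s.card = Fintype.card V - 1 ∧ (G.induce (s : Set V)).Connected)).card := by
  apply Finset.card_bij (fun v _ => Finset.univ.erase v)
  · intro v hv
    simp only [Finset.mem_filter, Finset.mem_univ, true_and] at hv ⊢
    have hset : ((Finset.univ.erase v : Finset V) : Set V) = {u | u ≠ v} := by
      ext u; simp
    constructor
    · simp [Finset.card_erase_of_mem]
    · rw [hset]; exact hv
  · intro v _ w _ h
    by_contra hne
    have : w ∈ Finset.univ.erase v := by simp [Ne.symm hne]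
    rw [h] at this
    exact (Finset.notMem_erase w Finset.univ) this
  · intro s hs
    simp only [Finset.mem_filter, Finset.mem_univ, true_and] at hs
    obtain ⟨hcard, hconn⟩ := hs
    have hne : s ≠ Finset.univ := by
      intro h
      rw [h, Finset.card_univ] at hcard
      have : 0 < Fintype.card V := by
        have : Nonempty (s : Set V) := hconn.nonempty
        have : s.Nonempty := aux_connected_nonempty hconn
        calc 0 < s.card := Finset.card_pos.mpr this
        _ ≤ Fintype.card V := Finset.card_le_univ s
      omega
    obtain ⟨v, hv⟩ : ∃ v, v ∉ s := by
      by_contra h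
      push_neg at h
      exact hne (Finset.eq_univ_of_forall h)
    have hsub : s ⊆ Finset.univ.erase v := fun u hu =>
      Finset.mem_erase.mpr ⟨fun h => hv (h ▸ hu), Finset.mem_univ u⟩
    have hcard' : (Finset.univ.erase v).card ≤ s.card := by
      rw [Finset.card_erase_of_mem (Finset.mem_univ v), Finset.card_univ, hcard]
    have hseq : Finset.univ.erase v = s :=
      (Finset.eq_of_subset_of_card_le hsub hcard').symm
    have hset : ({u | u ≠ v} : Set V) = (s : Set V) := by
      rw [← hseq]; ext u; simp
    refine ⟨v, ?_, hseq⟩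
    simp only [Finset.mem_filter, Finset.mem_univ, true_and]
    rw [hset]; exact hconn


lemma aux_d1 {V : Type*} [Fintype V] (G : SimpleGraph V) (hG : G.Connected)
    (hn : 2 ≤ Fintype.card V) :
    HasDerivAt (nRel G) (cutVertexCount G : ℝ) 1 := by
  have h := aux_hasDerivAt_nRel G 1
  set n := Fintype.card V with hn_def
  have hterm : ∀ s : Finset V, (if (G.induce (s : Set V)).Connected
      then ((s.card : ℝ) * (1:ℝ) ^ (s.card - 1) * (1-(1:ℝ)) ^ (n - s.card)
        - ((n - s.card : ℕ) : ℝ) *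
          ((1:ℝ) ^ s.card * (1-(1:ℝ)) ^ (n - s.card - 1)))
      else 0)
      = (if s = Finset.univ then (n:ℝ) else 0)
        - (if (s.card = n - 1 ∧ (G.induce (s : Set V)).Connected) then 1 else 0) := by
    intro s
    by_cases hs : (G.induce (s : Set V)).Connected
    · by_cases hu : s = Finset.univ
      · subst hu
        have hcard : (Finset.univ : Finset V).card = n := Finset.card_univ
        simp [hs, hcard, (by omega : n - n = 0)]
        rw [if_neg (by omega : ¬ n = n - 1)]
        ring
      · have hlt : s.card < n := by
          rcases lt_or_eq_of_le (Finset.card_le_univ s) with h' | h'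
          · exact h'
          · exact absurd (Finset.card_eq_iff_eq_univ s |>.mp h') hu
        by_cases hm : s.card = n - 1
        · have h1 : n - s.card = 1 := by omega
          rw [if_pos hs, if_neg (by simp [hu] : ¬ s = Finset.univ),
            if_pos ⟨hm, hs⟩, h1]
          norm_num
        · have h2 : 2 ≤ n - s.card := by omega
          simp [hs, hu, hm, zero_pow (by omega : n - s.card ≠ 0),
            zero_pow (by omega : n - s.card - 1 ≠ 0)]
    · have hu : s ≠ Finset.univ := fun h' => hs (h' ▸ aux_univ_connected hG)
      simp [hs, hu]
  rw [Finset.sum_congr rfl (fun s _ => hterm s)] at h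
  rw [Finset.sum_sub_distrib] at h
  rw [Finset.sum_ite_eq' Finset.univ Finset.univ (fun _ => (n:ℝ)), Finset.sum_boole] at h
  simp only [Finset.mem_univ, if_true] at h
  have hcc : (Finset.univ.filter (fun s : Finset V =>
      s.card = n - 1 ∧ (G.induce (s : Set V)).Connected)).card
      = (Finset.univ.filter (fun v : V => (G.induce {u | u ≠ v}).Connected)).card :=
    (aux_card_compl G).symm
  have hsplit : (Finset.univ.filter (fun v : V => (G.induce {u | u ≠ v}).Connected)).card
      + cutVertexCount G = n := by
    unfold cutVertexCount
    exact Finset.card_filter_add_card_filter_not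
      (p := fun v : V => (G.induce {u | u ≠ v}).Connected)
  have : (n:ℝ) - (Finset.univ.filter (fun s : Finset V =>
      s.card = n - 1 ∧ (G.induce (s : Set V)).Connected)).card = (cutVertexCount G : ℝ) := by
    rw [hcc]
    have := hsplit
    push_cast [← this]
    ring
  rw [this] at h
  exact h


theorem stmt16 {V : Type*} [Fintype V] (G : SimpleGraph V) (hG : G.Connected)
    (ht : 2 ≤ cutVertexCount G) :
    ∃ p ∈ Set.Ioo (0:ℝ) 1, nRel G p = p := by
  have hcle : cutVertexCount G ≤ Fintype.card V := by
    unfold cutVertexCount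
    calc (Finset.univ.filter _).card ≤ (Finset.univ : Finset V).card :=
          Finset.card_filter_le _ _
      _ = Fintype.card V := Finset.card_univ
  have hn : 2 ≤ Fintype.card V := le_trans ht hcle
  set f := nRel G with hf_def
  have hf0 : f 0 = 0 := aux_nRel_zero G
  have hf1 : f 1 = 1 := aux_nRel_one G hG
  -- near 0 : f p > p
  have hd0 : HasDerivAt f (Fintype.card V : ℝ) 0 := aux_d0 G
  have hslope0 := hasDerivAt_iff_tendsto_slope.mp hd0
  have h1ltn : (1:ℝ) < (Fintype.card V : ℝ) := by exact_mod_cast (by omega : 1 < Fintype.card V)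
  have hev0 : ∀ᶠ p in nhdsWithin (0:ℝ) {(0:ℝ)}ᶜ, 1 < slope f 0 p :=
    hslope0.eventually (eventually_gt_nhds h1ltn)
  have hmono0 : nhdsWithin (0:ℝ) (Set.Ioi 0) ≤ nhdsWithin (0:ℝ) {(0:ℝ)}ᶜ :=
    nhdsWithin_mono 0 (fun x hx => ne_of_gt hx)
  have hmem0 : Set.Ioo (0:ℝ) (1/2) ∈ nhdsWithin (0:ℝ) (Set.Ioi 0) :=
    Ioo_mem_nhdsGT_of_mem ⟨le_refl 0, by norm_num⟩
  obtain ⟨p0, hp0s, hp0m⟩ := ((hev0.filter_mono hmono0).and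
    (Filter.eventually_of_mem hmem0 (fun x hx => hx))).exists
  have hp0pos : 0 < p0 := hp0m.1
  have hfp0 : p0 < f p0 := by
    have hsl : slope f 0 p0 = f p0 / p0 := by
      rw [slope_def_field]; simp [hf0]
    rw [hsl] at hp0s
    exact (one_lt_div hp0pos).mp hp0s
  -- near 1 : f p < p
  have hd1 : HasDerivAt f (cutVertexCount G : ℝ) 1 := aux_d1 G hG hn
  have hslope1 := hasDerivAt_iff_tendsto_slope.mp hd1
  have h1ltt : (1:ℝ) < (cutVertexCount G : ℝ) := by exact_mod_cast (by omega : 1 < cutVertexCount G)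
  have hev1 : ∀ᶠ p in nhdsWithin (1:ℝ) {(1:ℝ)}ᶜ, 1 < slope f 1 p :=
    hslope1.eventually (eventually_gt_nhds h1ltt)
  have hmono1 : nhdsWithin (1:ℝ) (Set.Iio 1) ≤ nhdsWithin (1:ℝ) {(1:ℝ)}ᶜ :=
    nhdsWithin_mono 1 (fun x hx => ne_of_lt hx)
  have hmem1 : Set.Ioo (1/2 : ℝ) 1 ∈ nhdsWithin (1:ℝ) (Set.Iio 1) :=
    Ioo_mem_nhdsLT_of_mem ⟨by norm_num, le_refl 1⟩
  obtain ⟨p1, hp1s, hp1m⟩ := ((hev1.filter_mono hmono1).and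
    (Filter.eventually_of_mem hmem1 (fun x hx => hx))).exists
  have hp1lt : p1 < 1 := hp1m.2
  have hfp1 : f p1 < p1 := by
    have hsl : slope f 1 p1 = (f p1 - 1) / (p1 - 1) := by
      rw [slope_def_field]; simp [hf1]
    rw [hsl] at hp1s
    have hneg : p1 - 1 < 0 := by linarith
    have := (lt_div_iff_of_neg hneg).mp hp1s
    linarith
  -- IVT
  have hp01 : p0 < p1 := lt_trans hp0m.2 hp1m.1
  have hcont : ContinuousOn (fun p => f p - p) (Set.Icc p0 p1) :=
    ((aux_continuous_nRel G).sub continuous_id).continuousOn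
  have hivt := intermediate_value_Ioo' (le_of_lt hp01) hcont
  have h0mem : (0:ℝ) ∈ Set.Ioo ((fun p => f p - p) p1) ((fun p => f p - p) p0) := by
    constructor <;> simp only <;> linarith
  obtain ⟨c, hc, hceq⟩ := hivt h0mem
  refine ⟨c, ⟨lt_trans hp0pos hc.1, lt_trans hc.2 hp1lt⟩, ?_⟩
  have : f c - c = 0 := hceq
  linarith
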